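/- Let X, Y be real normed linear spaces, C ⊆ X a nonempty convex set, and F : C → Y a mapping. Let D_n (n ∈ ℕ) be nonempty convex subsets of C such that D_n ⊆ D_{n+1} for each n, the union of the D_n equals C, and for each n: dist(D_n, C \ D_{n+1}) > 0, D_n is relatively open in C, and the restriction of F to D_n is d.c. with a control function γ_n : D_n → ℝ that is either bounded or Lipschitz. Then F is d.c. on C. -/

import Mathlib

open Set Metric Bornology Filter NNReal

/-- `f` is a control function for `F` on the convex set `C`. -/
def IsControlOn {X Y : Type*} [NormedAddCommGroup X] [NormedSpace ℝ X]
    [NormedAddCommGroup Y] [NormedSpace ℝ Y]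
    (C : Set X) (F : X → Y) (f : X → ℝ) : Prop :=
  ContinuousOn f C ∧
    ∀ φ : Y →L[ℝ] ℝ, ‖φ‖ ≤ 1 → ConvexOn ℝ C (fun x => φ (F x) + f x)

/-- `F` is a d.c. (delta-convex) mapping on `C`. -/
def IsDCOn {X Y : Type*} [NormedAddCommGroup X] [NormedSpace ℝ X]
    [NormedAddCommGroup Y] [NormedSpace ℝ Y]
    (C : Set X) (F : X → Y) : Prop :=
  ContinuousOn F C ∧ ∃ f : X → ℝ, IsControlOn C F f

/-- `g` is a d.c. function on `C`: a difference of two continuous convex functions. -/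
def IsDCFnOn {X : Type*} [NormedAddCommGroup X] [NormedSpace ℝ X]
    (C : Set X) (g : X → ℝ) : Prop :=
  ∃ p q : X → ℝ, ContinuousOn p C ∧ ContinuousOn q C ∧
    ConvexOn ℝ C p ∧ ConvexOn ℝ C q ∧ ∀ x ∈ C, g x = p x - q x

/-- `A ⊂⊂ B`: some ε-enlargement of `A` is contained in `B`. -/
def SubSub {X : Type*} [NormedAddCommGroup X] (A B : Set X) : Prop :=
  ∃ ε > (0:ℝ), ∀ a ∈ A, ∀ y : X, ‖y‖ < ε → a + y ∈ B

/-- `N` is an equivalent norm on `Y` with modulus of convexity of power type 2. -/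
def IsEquivNormPT2 {Y : Type*} [NormedAddCommGroup Y] [NormedSpace ℝ Y] (N : Y → ℝ) : Prop :=
  (∀ u v : Y, N (u + v) ≤ N u + N v) ∧
  (∀ (a : ℝ) (u : Y), N (a • u) = |a| * N u) ∧
  (∃ c₁ c₂ : ℝ, 0 < c₁ ∧ 0 < c₂ ∧ ∀ u : Y, c₁ * ‖u‖ ≤ N u ∧ N u ≤ c₂ * ‖u‖) ∧
  (∃ a : ℝ, 0 < a ∧ ∀ ε : ℝ, ε ∈ Set.Ioc (0:ℝ) 2 → ∀ u v : Y,
    N u ≤ 1 → N v ≤ 1 → ε ≤ N (u - v) → a * ε ^ 2 ≤ 1 - N ((2⁻¹ : ℝ) • (u + v)))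

/-- `G` is `C^{1,1}` on `U`: Fréchet differentiable with Lipschitz derivative. -/
def IsC11On {X Y : Type*} [NormedAddCommGroup X] [NormedSpace ℝ X]
    [NormedAddCommGroup Y] [NormedSpace ℝ Y] (U : Set X) (G : X → Y) : Prop :=
  ∃ G' : X → X →L[ℝ] Y, (∀ x ∈ U, HasFDerivAt G (G' x) x) ∧
    ∃ L : NNReal, LipschitzOnWith L G' U

/-- `F` is locally d.c. on `C`: each point of `C` has a convex neighborhood `U`
with `F` d.c. on `U ∩ C`. -/
def LocallyDCOn {X Y : Type*} [NormedAddCommGroup X] [NormedSpace ℝ X]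
    [NormedAddCommGroup Y] [NormedSpace ℝ Y] (C : Set X) (F : X → Y) : Prop :=
  ∀ a ∈ C, ∃ U : Set X, U ∈ nhds a ∧ Convex ℝ U ∧ IsDCOn (U ∩ C) F

set_option linter.unusedSectionVars false

section Aux
variable {X : Type*} [NormedAddCommGroup X] [NormedSpace ℝ X]

/-- Inf-convolution of `γ` (restricted to `D`) with `L * ‖·‖`. -/
noncomputable def infConv (D : Set X) (γ : X → ℝ) (L : ℝ) : X → ℝ :=
  fun x => sInf ((fun y => γ y + L * ‖x - y‖) '' D)

variable {D : Set X} {γ : X → ℝ} {L : ℝ}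

theorem infConv_lowerBound (hD : D.Nonempty) (hL : 0 ≤ L)
    (hlip : ∀ y ∈ D, ∀ y' ∈ D, γ y ≤ γ y' + L * ‖y - y'‖) (x : X) :
    ∀ b ∈ ((fun y => γ y + L * ‖x - y‖) '' D), γ hD.some - L * ‖x - hD.some‖ ≤ b := by
  rintro b ⟨y, hy, hyb⟩
  have hyb' : γ y + L * ‖x - y‖ = b := hyb
  have h1 : γ hD.some ≤ γ y + L * ‖hD.some - y‖ := hlip _ hD.some_mem _ hy
  have h2 : ‖hD.some - y‖ ≤ ‖x - y‖ + ‖x - hD.some‖ := by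
    have he : hD.some - y = (x - y) - (x - hD.some) := by abel
    rw [he]; exact norm_sub_le _ _
  nlinarith [mul_le_mul_of_nonneg_left h2 hL]

theorem infConv_bddBelow (hD : D.Nonempty) (hL : 0 ≤ L)
    (hlip : ∀ y ∈ D, ∀ y' ∈ D, γ y ≤ γ y' + L * ‖y - y'‖) (x : X) :
    BddBelow ((fun y => γ y + L * ‖x - y‖) '' D) :=
  ⟨_, infConv_lowerBound hD hL hlip x⟩

theorem infConv_le (hD : D.Nonempty) (hL : 0 ≤ L)
    (hlip : ∀ y ∈ D, ∀ y' ∈ D, γ y ≤ γ y' + L * ‖y - y'‖)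
    {y : X} (hy : y ∈ D) (x : X) :
    infConv D γ L x ≤ γ y + L * ‖x - y‖ :=
  csInf_le (infConv_bddBelow hD hL hlip x) ⟨y, hy, rfl⟩

theorem le_infConv (hD : D.Nonempty) {c : ℝ} {x : X}
    (h : ∀ y ∈ D, c ≤ γ y + L * ‖x - y‖) : c ≤ infConv D γ L x := by
  refine le_csInf (hD.image _) ?_
  rintro b ⟨y, hy, hyb⟩
  have hyb' : γ y + L * ‖x - y‖ = b := hyb
  rw [← hyb']; exact h y hy

theorem infConv_eq_self (hD : D.Nonempty) (hL : 0 ≤ L)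
    (hlip : ∀ y ∈ D, ∀ y' ∈ D, γ y ≤ γ y' + L * ‖y - y'‖)
    {x : X} (hx : x ∈ D) : infConv D γ L x = γ x := by
  refine le_antisymm ?_ (le_infConv hD fun y hy => hlip _ hx _ hy)
  have := infConv_le hD hL hlip hx x
  simpa using this

theorem infConv_lip (hD : D.Nonempty) (hL : 0 ≤ L)
    (hlip : ∀ y ∈ D, ∀ y' ∈ D, γ y ≤ γ y' + L * ‖y - y'‖) (x x' : X) :
    infConv D γ L x ≤ infConv D γ L x' + L * ‖x - x'‖ := by
  have h : infConv D γ L x - L * ‖x - x'‖ ≤ infConv D γ L x' := by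
    refine le_csInf (hD.image _) ?_
    rintro b ⟨y, hy, hyb⟩
    have hyb' : γ y + L * ‖x' - y‖ = b := hyb
    have h1 : infConv D γ L x ≤ γ y + L * ‖x - y‖ := infConv_le hD hL hlip hy x
    have h2 : ‖x - y‖ ≤ ‖x' - y‖ + ‖x - x'‖ := by
      have he : x - y = (x' - y) + (x - x') := by abel
      rw [he]; exact norm_add_le _ _
    nlinarith [mul_le_mul_of_nonneg_left h2 hL]
  linarith

theorem infConv_continuous (hD : D.Nonempty) (hL : 0 ≤ L)
    (hlip : ∀ y ∈ D, ∀ y' ∈ D, γ y ≤ γ y' + L * ‖y - y'‖) :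
    Continuous (infConv D γ L) := by
  apply LipschitzWith.continuous (K := Real.toNNReal L)
  apply LipschitzWith.of_dist_le_mul
  intro x x'
  rw [Real.dist_eq, Real.coe_toNNReal _ hL, dist_eq_norm]
  rw [abs_le]
  have h1 := infConv_lip hD hL hlip x x'
  have h2 := infConv_lip hD hL hlip x' x
  have hn : ‖x' - x‖ = ‖x - x'‖ := norm_sub_rev _ _
  constructor
  · rw [hn] at h2; linarith
  · linarith

theorem infConv_convexOn (hD : D.Nonempty) (hDc : Convex ℝ D) (hL : 0 ≤ L)
    (hγ : ConvexOn ℝ D γ)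
    (hlip : ∀ y ∈ D, ∀ y' ∈ D, γ y ≤ γ y' + L * ‖y - y'‖) :
    ConvexOn ℝ univ (infConv D γ L) := by
  refine ⟨convex_univ, ?_⟩
  intro x _ x' _ a b ha hb hab
  have key : ∀ y ∈ D, ∀ y' ∈ D,
      infConv D γ L (a • x + b • x') ≤ a * (γ y + L * ‖x - y‖) + b * (γ y' + L * ‖x' - y'‖) := by
    intro y hy y' hy'
    have hmem : a • y + b • y' ∈ D := hDc hy hy' ha hb hab
    have h1 : infConv D γ L (a • x + b • x') ≤
        γ (a • y + b • y') + L * ‖(a • x + b • x') - (a • y + b • y')‖ :=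
      infConv_le hD hL hlip hmem _
    have h2 : γ (a • y + b • y') ≤ a * γ y + b * γ y' := hγ.2 hy hy' ha hb hab
    have h3 : ‖(a • x + b • x') - (a • y + b • y')‖ ≤ a * ‖x - y‖ + b * ‖x' - y'‖ := by
      have he : (a • x + b • x') - (a • y + b • y') = a • (x - y) + b • (x' - y') := by
        module
      rw [he]
      calc ‖a • (x - y) + b • (x' - y')‖ ≤ ‖a • (x - y)‖ + ‖b • (x' - y')‖ := norm_add_le _ _
      _ = a * ‖x - y‖ + b * ‖x' - y'‖ := by
          rw [norm_smul, norm_smul, Real.norm_eq_abs, Real.norm_eq_abs,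
            abs_of_nonneg ha, abs_of_nonneg hb]
    nlinarith [mul_le_mul_of_nonneg_left h3 hL]
  simp only [smul_eq_mul]
  refine le_of_forall_pos_le_add ?_
  intro δ hδ
  have hδ2 : 0 < δ / 2 := by linarith
  obtain ⟨u, hu, hult⟩ := Real.lt_sInf_add_pos (hD.image (fun y => γ y + L * ‖x - y‖)) hδ2
  obtain ⟨u2, hu2, hult2⟩ := Real.lt_sInf_add_pos (hD.image (fun y => γ y + L * ‖x' - y‖)) hδ2
  obtain ⟨y, hy, hyu⟩ := hu
  obtain ⟨y2, hy2, hyu2⟩ := hu2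
  have e1 : γ y + L * ‖x - y‖ = u := hyu
  have e2 : γ y2 + L * ‖x' - y2‖ = u2 := hyu2
  have hk := key y hy y2 hy2
  have hIx : infConv D γ L x = sInf ((fun y => γ y + L * ‖x - y‖) '' D) := rfl
  have hIx' : infConv D γ L x' = sInf ((fun y => γ y + L * ‖x' - y‖) '' D) := rfl
  have ha1 : a * (γ y + L * ‖x - y‖) ≤ a * (infConv D γ L x + δ/2) := by
    apply mul_le_mul_of_nonneg_left _ ha
    rw [hIx, e1]; linarith
  have hb1 : b * (γ y2 + L * ‖x' - y2‖) ≤ b * (infConv D γ L x' + δ/2) := by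
    apply mul_le_mul_of_nonneg_left _ hb
    rw [hIx', e2]; linarith
  nlinarith [hk]

end Aux

open Classical in
/-- Recursive gluing of the branch functions `h` along the exhaustion `D`. -/
noncomputable def glueSeq {X : Type*} (D : ℕ → Set X) (h : ℕ → X → ℝ) : ℕ → X → ℝ
  | 0 => h 0
  | n+1 => fun x => if x ∈ D n then max (glueSeq D h n x) (h (n+1) x) else h (n+1) x

theorem glueSeq_zero {X : Type*} (D : ℕ → Set X) (h : ℕ → X → ℝ) :
    glueSeq D h 0 = h 0 := rfl

open Classical in
theorem glueSeq_succ {X : Type*} (D : ℕ → Set X) (h : ℕ → X → ℝ) (n : ℕ) (x : X) :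
    glueSeq D h (n+1) x =
      if x ∈ D n then max (glueSeq D h n x) (h (n+1) x) else h (n+1) x := rfl

section Helpers2
variable {X : Type*} [NormedAddCommGroup X] [NormedSpace ℝ X]

/-- continuity within a set, via agreement with a function continuous on a bigger set,
on an open neighborhood. -/
theorem cwa_of_eqOn_open {α : Type*} [TopologicalSpace α] {fn G : X → α} {S S' O : Set X} {x : X}
    (hO : IsOpen O) (hxO : x ∈ O) (hxS : x ∈ S) (hxS' : x ∈ S')
    (hsub : S ∩ O ⊆ S') (heq : ∀ y ∈ S ∩ O, fn y = G y)
    (hG : ContinuousOn G S') : ContinuousWithinAt fn S x := by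
  have hOx : O ∈ nhds x := hO.mem_nhds hxO
  have h1 : ContinuousWithinAt G (S ∩ O) x := ((hG x hxS').mono hsub)
  have h2 : ContinuousWithinAt G S x := (continuousWithinAt_inter hOx).mp h1
  apply h2.congr_of_eventuallyEq
  · have hSO : S ∩ O ∈ nhdsWithin x S :=
      Filter.inter_mem self_mem_nhdsWithin (mem_nhdsWithin_of_mem_nhds hOx)
    exact Filter.eventually_of_mem hSO heq
  · exact heq x ⟨hxS, hxO⟩

/-- sum of convex functions over a finset is convex -/
theorem convexOn_finsetSum {ι : Type*} {s : Set X} (hs : Convex ℝ s) (t : Finset ι)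
    {f : ι → X → ℝ} (hf : ∀ i ∈ t, ConvexOn ℝ s (f i)) :
    ConvexOn ℝ s (fun x => ∑ i ∈ t, f i x) := by
  classical
  induction t using Finset.induction_on with
  | empty => simpa using convexOn_const 0 hs
  | insert a t' hnot ih =>
    have h1 : ConvexOn ℝ s (f a) := hf a (Finset.mem_insert_self a t')
    have h2 : ConvexOn ℝ s (fun x => ∑ i ∈ t', f i x) :=
      ih fun i hi => hf i (Finset.mem_insert_of_mem hi)
    refine (h1.add h2).congr ?_
    intro x _
    simp [Finset.sum_insert hnot]

end Helpers2

section Sub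
variable {X : Type*} [NormedAddCommGroup X] [NormedSpace ℝ X]

theorem exists_subgradient_zero (g : X → ℝ) (hg : ConvexOn ℝ univ g) (hc : Continuous g) :
    ∃ ℓ : X →L[ℝ] ℝ, ∀ x, g 0 + ℓ x ≤ g x := by
  classical
  set S : Set (X × ℝ) := {p | g p.1 < p.2} with hS
  have hSopen : IsOpen S := isOpen_lt (hc.comp continuous_fst) continuous_snd
  have hSconv : Convex ℝ S := by
    intro p hp q hq a b ha hb hab
    simp only [hS, mem_setOf_eq] at hp hq ⊢
    have h1 : g (a • p.1 + b • q.1) ≤ a * g p.1 + b * g q.1 :=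
      hg.2 (mem_univ _) (mem_univ _) ha hb hab
    have h2 : a * g p.1 + b * g q.1 < a * p.2 + b * q.2 := by
      rcases eq_or_lt_of_le ha with h | h
      · have hb1 : b = 1 := by linarith
        simp [← h, hb1, hp, hq]
      · have := mul_lt_mul_of_pos_left hp h
        have h2b := mul_le_mul_of_nonneg_left (le_of_lt hq) hb
        linarith
    exact lt_of_le_of_lt h1 h2
  have hpt : ((0 : X), g 0) ∉ S := by simp [hS]
  obtain ⟨φ, hφ⟩ := geometric_hahn_banach_open_point hSconv hSopen hpt
  set ℓ₀ : X →L[ℝ] ℝ := φ.comp (ContinuousLinearMap.inl ℝ X ℝ) with hℓ₀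
  set c : ℝ := φ (0, 1) with hc1
  have hdecomp : ∀ (x : X) (t : ℝ), φ (x, t) = ℓ₀ x + t * c := by
    intro x t
    have : (x, t) = (x, (0:ℝ)) + t • ((0:X), (1:ℝ)) := by
      simp [Prod.ext_iff]
    rw [this, map_add, map_smul]
    simp [hℓ₀, hc1, ContinuousLinearMap.comp_apply, ContinuousLinearMap.inl_apply,
      smul_eq_mul, mul_comm]
  have hφ0 : φ ((0:X), g 0) = ℓ₀ 0 + g 0 * c := hdecomp 0 (g 0)
  have hcneg : c < 0 := by
    have h1 : φ ((0:X), g 0 + 1) < φ ((0:X), g 0) := by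
      apply hφ
      simp [hS]
    rw [hdecomp, hφ0] at h1
    nlinarith
  have key : ∀ x : X, ℓ₀ x + g x * c ≤ ℓ₀ 0 + g 0 * c := by
    intro x
    have h2 : ∀ δ : ℝ, 0 < δ → ℓ₀ x + g x * c + δ * c < ℓ₀ 0 + g 0 * c := by
      intro δ hδ
      have h1 : φ (x, g x + δ) < φ ((0:X), g 0) := by
        apply hφ
        simp [hS, hδ]
      rw [hdecomp, hφ0] at h1
      nlinarith
    refine le_of_forall_pos_le_add ?_
    intro ε hε
    have hδ : 0 < ε / (-c) := div_pos hε (by linarith)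
    have := h2 _ hδ
    have hcne : c ≠ 0 := ne_of_lt hcneg
    have hcc : ε / (-c) * c = -ε := by
      rw [div_mul_eq_mul_div, div_neg, mul_div_assoc, div_self hcne, mul_one]
    nlinarith
  refine ⟨(-c)⁻¹ • ℓ₀, fun x => ?_⟩
  have hk := key x
  have hpos : 0 < -c := by linarith
  simp only [ContinuousLinearMap.smul_apply, smul_eq_mul]
  rw [map_zero] at hk
  have h3 : (-c)⁻¹ * ℓ₀ x ≤ g x - g 0 := by
    rw [inv_mul_le_iff₀ hpos]
    nlinarith
  linarith

end Sub

section Glue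
variable {X : Type*} [NormedAddCommGroup X] [NormedSpace ℝ X]

/-- Reach lemma: from `z ∈ B` moving towards `y ∈ B'`, we can find a point of the
segment that is still in `B` and either equals `y ∈ B` or avoids `A`. -/
theorem glue_reach {C B B' A U : Set X} {ε : ℝ}
    (hC : Convex ℝ C) (hB'C : B' ⊆ C) (hBB' : B ⊆ B') (hBconv : Convex ℝ B)
    (hU : IsOpen U) (hBeq : B = U ∩ C) (hε : 0 < ε)
    (hsep : ∀ a ∈ A, ∀ b ∈ C \ B, ε ≤ ‖a - b‖)
    {z y : X} (hz : z ∈ B) (hy : y ∈ B') :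
    ∃ s : ℝ, 0 ≤ s ∧ s ≤ 1 ∧ ((1 - s) • z + s • y ∈ B) ∧
      ((s = 1 ∧ y ∈ B) ∨ ((1 - s) • z + s • y ∈ B ∧ (1 - s) • z + s • y ∉ A)) := by
  classical
  by_cases hyB : y ∈ B
  · exact ⟨1, by norm_num, le_refl 1, by simpa using hyB, Or.inl ⟨rfl, hyB⟩⟩
  -- the path
  set P : ℝ → X := fun s => (1 - s) • z + s • y with hP
  have hPcont : Continuous P := by
    apply Continuous.add
    · exact (continuous_const.sub continuous_id).smul continuous_const
    · exact continuous_id.smul continuous_const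
  have hP0 : P 0 = z := by simp [hP]
  have hP1 : P 1 = y := by simp [hP]
  have hPC : ∀ s, 0 ≤ s → s ≤ 1 → P s ∈ C := by
    intro s h0 h1
    exact hC (hBB'.trans hB'C hz) (hB'C hy) (by linarith) h0 (by ring)
  set I : Set ℝ := {s | 0 ≤ s ∧ s ≤ 1 ∧ P s ∈ B} with hI
  have hI0 : (0:ℝ) ∈ I := ⟨le_refl 0, by norm_num, by rw [hP0]; exact hz⟩
  have hIne : I.Nonempty := ⟨0, hI0⟩
  have hIbdd : BddAbove I := ⟨1, fun s hs => hs.2.1⟩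
  set s' : ℝ := sSup I with hs'
  have hs'0 : 0 ≤ s' := le_csSup hIbdd hI0
  have hs'1 : s' ≤ 1 := csSup_le hIne fun s hs => hs.2.1
  -- downward closedness
  have hdown : ∀ s t : ℝ, s ∈ I → 0 ≤ t → t ≤ s → t ∈ I := by
    intro s t hs h0 hts
    refine ⟨h0, hts.trans hs.2.1, ?_⟩
    rcases eq_or_lt_of_le (h0.trans hts) with h | hpos
    · have ht0 : t = 0 := le_antisymm (by rw [← h] at hts; exact hts) h0
      rw [ht0, hP0]; exact hz
    · -- P t is a convex combination of z and P s
      have hcomb : P t = (1 - t/s) • z + (t/s) • P s := by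
        have hsne : s ≠ 0 := ne_of_gt hpos
        rw [hP]
        simp only []
        rw [smul_add, smul_smul, smul_smul]
        have h1 : (t/s) * (1 - s) = t/s - t := by field_simp
        have h2 : (t/s) * s = t := by field_simp
        rw [h1, h2]
        module
      rw [hcomb]
      have ht1 : t/s ≤ 1 := by
        rw [div_le_one hpos]; exact hts
      have hd0 : 0 ≤ t/s := div_nonneg h0 (le_of_lt hpos)
      exact hBconv hz hs.2.2 (by linarith) hd0 (by ring)
  -- membership below sSup
  have hbelow : ∀ t : ℝ, 0 ≤ t → t < s' → t ∈ I := by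
    intro t h0 hlt
    obtain ⟨s, hsI, hst⟩ := exists_lt_of_lt_csSup hIne hlt
    exact hdown s t hsI h0 (le_of_lt hst)
  -- points above sSup are not in I
  have habove : ∀ t : ℝ, s' < t → t ∉ I := by
    intro t hlt hmem
    exact absurd (le_csSup hIbdd hmem) (not_le.mpr hlt)
  -- s' itself is not in I
  have hs'notI : s' ∉ I := by
    intro hmem
    rcases eq_or_lt_of_le hs'1 with h1 | h1
    · rw [h1] at hmem
      exact hyB (hP1 ▸ hmem.2.2)
    · -- openness gives a bigger element
      have hPB : P s' ∈ U := by
        have h := hmem.2.2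
        rw [hBeq] at h
        exact h.1
      have : ∀ᶠ t in nhds s', P t ∈ U := (hPcont.continuousAt).eventually_mem (hU.mem_nhds hPB)
      obtain ⟨δ, hδpos, hδ⟩ := Metric.eventually_nhds_iff.mp this
      set t := min 1 (s' + δ/2) with ht
      have htI : t ∈ I := by
        refine ⟨by positivity, min_le_left _ _, ?_⟩
        rw [hBeq]
        constructor
        · apply hδ
          rw [Real.dist_eq]
          have hst : s' ≤ t := by
            rw [ht]; exact le_min (le_of_lt h1) (by linarith)
          have hts : t - s' ≤ δ/2 := by
            have := min_le_right 1 (s' + δ/2)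
            rw [ht]; simp only [inf_le_iff] at this ⊢
            linarith [min_le_right (1:ℝ) (s' + δ/2)]
          rw [abs_lt]; constructor <;> linarith
        · exact hPC t (by positivity) (min_le_left _ _)
      have : t ≤ s' := le_csSup hIbdd htI
      have hts' : s' < t := by
        rw [ht]
        apply lt_min h1
        linarith
      linarith
  have hs'pos : 0 < s' := by
    rcases eq_or_lt_of_le hs'0 with h | h
    · exfalso; exact hs'notI (h ▸ hI0)
    · exact h
  -- choose the two parameters
  set δ : ℝ := min (ε / (2 * (‖y - z‖ + 1))) s' with hδdef
  have hδpos : 0 < δ := by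
    apply lt_min _ hs'pos
    positivity
  have hδle : δ ≤ ε / (2 * (‖y - z‖ + 1)) := min_le_left _ _
  obtain ⟨s₁, hs₁I, hs₁gt⟩ := exists_lt_of_lt_csSup hIne (by linarith : s' - δ < s')
  set s₂ : ℝ := min 1 (s' + δ) with hs₂def
  have hs₂nI : s₂ ∉ I := by
    rcases le_or_gt 1 (s' + δ) with h | h
    · have : s₂ = 1 := by rw [hs₂def]; exact min_eq_left h
      rw [this]
      intro hmem
      exact hyB (hP1 ▸ hmem.2.2)
    · have : s₂ = s' + δ := by rw [hs₂def]; exact min_eq_right (le_of_lt h)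
      rw [this]
      exact habove _ (by linarith)
  have hs₂0 : 0 ≤ s₂ := le_min (by norm_num) (by linarith)
  have hs₂1 : s₂ ≤ 1 := min_le_left _ _
  have hPs₂ : P s₂ ∈ C \ B := by
    constructor
    · exact hPC _ hs₂0 hs₂1
    · intro hmem
      exact hs₂nI ⟨hs₂0, hs₂1, hmem⟩
  -- the distance bound
  have hs₁s₂ : |s₁ - s₂| ≤ 2 * δ := by
    have h1 : s₁ ≤ s' := le_csSup hIbdd hs₁I
    have h2 : s' - δ < s₁ := hs₁gt
    have h3 : s₂ ≤ s' + δ := min_le_right _ _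
    have h4 : s' - δ ≤ s₂ := by
      apply le_min
      · linarith
      · linarith
    rw [abs_le]; constructor <;> linarith
  have hdist : ‖P s₁ - P s₂‖ < ε := by
    have he : P s₁ - P s₂ = (s₂ - s₁) • (z - y) := by
      rw [hP]; simp only []; module
    rw [he, norm_smul, Real.norm_eq_abs]
    have h1 : |s₂ - s₁| ≤ 2 * δ := by rw [abs_sub_comm]; exact hs₁s₂
    have h2 : 2 * δ ≤ ε / (‖y - z‖ + 1) := by
      have := hδle
      rw [le_div_iff₀ (by positivity : (0:ℝ) < ‖y - z‖ + 1)]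
      rw [le_div_iff₀ (by positivity : (0:ℝ) < 2 * (‖y - z‖ + 1))] at this
      nlinarith
    have h3 : ‖z - y‖ = ‖y - z‖ := norm_sub_rev _ _
    have h4 : |s₂ - s₁| * ‖z - y‖ ≤ (ε / (‖y - z‖ + 1)) * ‖y - z‖ := by
      rw [h3]
      apply mul_le_mul (h1.trans h2) (le_refl _) (norm_nonneg _)
      positivity
    have h5 : (ε / (‖y - z‖ + 1)) * ‖y - z‖ < ε := by
      rw [div_mul_eq_mul_div, div_lt_iff₀ (by positivity : (0:ℝ) < ‖y - z‖ + 1)]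
      nlinarith [norm_nonneg (y - z)]
    linarith
  have hPs₁A : P s₁ ∉ A := by
    intro hmem
    have := hsep _ hmem _ hPs₂
    linarith
  exact ⟨s₁, hs₁I.1, hs₁I.2.1, hs₁I.2.2, Or.inr ⟨hs₁I.2.2, hPs₁A⟩⟩

theorem glueMax {C B B' A U : Set X} {ε : ℝ}
    (hC : Convex ℝ C) (hB'C : B' ⊆ C) (hBB' : B ⊆ B') (hBconv : Convex ℝ B)
    (hB'conv : Convex ℝ B')
    (hU : IsOpen U) (hBeq : B = U ∩ C) (hε : 0 < ε)
    (hsep : ∀ a ∈ A, ∀ b ∈ C \ B, ε ≤ ‖a - b‖)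
    {u v w : X → ℝ}
    (hu : ConvexOn ℝ B u) (hv : ConvexOn ℝ B' v)
    (huv : ∀ x ∈ B, x ∉ A → u x ≤ v x)
    (hwB : ∀ x ∈ B, w x = max (u x) (v x))
    (hwO : ∀ x ∈ B', x ∉ B → w x = v x) :
    ConvexOn ℝ B' w := by
  have hvw : ∀ t ∈ B', v t ≤ w t := by
    intro t ht
    by_cases htB : t ∈ B
    · rw [hwB t htB]; exact le_max_right _ _
    · rw [hwO t ht htB]
  have huw : ∀ t ∈ B, u t ≤ w t := by
    intro t ht
    rw [hwB t ht]; exact le_max_left _ _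
  refine ⟨hB'conv, ?_⟩
  intro x hx y hy a b ha hb hab
  set z := a • x + b • y with hzdef
  have hzB' : z ∈ B' := hB'conv hx hy ha hb hab
  have hvz : v z ≤ a * v x + b * v y := hv.2 hx hy ha hb hab
  have hvfin : v z ≤ a * w x + b * w y := by
    have h1 : a * v x ≤ a * w x := mul_le_mul_of_nonneg_left (hvw x hx) ha
    have h2 : b * v y ≤ b * w y := mul_le_mul_of_nonneg_left (hvw y hy) hb
    linarith
  by_cases hzB : z ∈ B
  · rw [hwB z hzB]
    -- side construction
    have side : ∀ (x' y' : X) (a' b' : ℝ), x' ∈ B' → y' ∈ B' → 0 ≤ a' → 0 ≤ b' →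
        a' + b' = 1 → z = a' • x' + b' • y' →
        ∃ (p : X) (r : ℝ), p ∈ B ∧ 0 ≤ r ∧ r ≤ 1 ∧ b' ≤ r ∧
          p = (1 - r) • x' + r • y' ∧ u p ≤ (1 - r) * w x' + r * w y' := by
      intro x' y' a' b' hx' hy' ha' hb' hab' hzeq
      obtain ⟨s, hs0, hs1, hpB, hcase⟩ :=
        glue_reach hC hB'C hBB' hBconv hU hBeq hε hsep hzB hy'
      set p := (1 - s) • z + s • y' with hpdef
      set r := (1 - s) * b' + s with hrdef
      have hr0 : 0 ≤ r := by
        have : 0 ≤ (1 - s) * b' := mul_nonneg (by linarith) hb'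
        rw [hrdef]; linarith
      have hr1 : r ≤ 1 := by
        have h1 : (1 - s) * b' ≤ (1 - s) * 1 := by
          apply mul_le_mul_of_nonneg_left _ (by linarith)
          linarith
        rw [hrdef]; linarith
      have hbr : b' ≤ r := by
        have : b' ≤ (1 - s) * b' + s * 1 := by nlinarith
        rw [hrdef]; linarith
      have hpeq : p = (1 - r) • x' + r • y' := by
        have h1mr : 1 - r = (1 - s) * a' := by rw [hrdef]; nlinarith [hab']
        rw [hpdef, hzeq, h1mr, hrdef]
        module
      refine ⟨p, r, hpB, hr0, hr1, hbr, hpeq, ?_⟩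
      rcases hcase with ⟨hseq, hyB⟩ | ⟨hpB2, hpA⟩
      · -- p = y'
        have hpy : p = y' := by rw [hpdef, hseq]; module
        have hr1' : r = 1 := by rw [hrdef, hseq]; ring
        rw [hpy, hr1']
        have := huw y' hyB
        linarith
      · have h1 : u p ≤ v p := huv p hpB2 hpA
        have h2 : v p ≤ (1 - r) * v x' + r * v y' := by
          have := hv.2 hx' hy' (by linarith : (0:ℝ) ≤ 1 - r) hr0 (by ring)
          rw [← hpeq] at this
          exact this
        have h3 : (1 - r) * v x' ≤ (1 - r) * w x' := 
          mul_le_mul_of_nonneg_left (hvw x' hx') (by linarith)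
        have h4 : r * v y' ≤ r * w y' := mul_le_mul_of_nonneg_left (hvw y' hy') hr0
        linarith
    -- apply the side construction on both sides
    obtain ⟨p, r₂, hpB, hr₂0, hr₂1, hbr₂, hpeq, hpu⟩ :=
      side x y a b hx hy ha hb hab rfl
    obtain ⟨q, r', hqB, hr'0, hr'1, har', hqeq, hqu⟩ :=
      side y x b a hy hx hb ha (by linarith) (by rw [hzdef]; module)
    set r₁ : ℝ := 1 - r' with hr₁def
    have hr₁0 : 0 ≤ r₁ := by rw [hr₁def]; linarith
    have hr₁1 : r₁ ≤ 1 := by rw [hr₁def]; linarith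
    have hr₁b : r₁ ≤ b := by rw [hr₁def]; linarith
    have hqeq' : q = (1 - r₁) • x + r₁ • y := by
      rw [hqeq, hr₁def]
      module
    have hqu' : u q ≤ (1 - r₁) * w x + r₁ * w y := by
      have hr'e : r' = 1 - r₁ := by rw [hr₁def]; ring
      rw [hr'e] at hqu
      linarith [hqu]
    have huzmax : u z ≤ a * w x + b * w y := by
      rcases eq_or_lt_of_le (hr₁b.trans hbr₂) with hEq | hLt
      · -- r₁ = r₂, hence both equal b
        have hr₁b' : r₁ = b := le_antisymm hr₁b (by linarith [hbr₂, hEq])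
        have hzq : z = q := by
          rw [hqeq', hr₁b', hzdef]
          have : 1 - b = a := by linarith
          rw [this]
        rw [hzq]
        have : (1 - r₁) * w x + r₁ * w y = a * w x + b * w y := by
          rw [hr₁b']
          have : 1 - b = a := by linarith
          rw [this]
        linarith [hqu']
      · -- r₁ < r₂
        set lam : ℝ := (r₂ - b) / (r₂ - r₁) with hlam
        have hden : 0 < r₂ - r₁ := by linarith
        have hlam0 : 0 ≤ lam := div_nonneg (by linarith) (le_of_lt hden)
        have hlam1 : lam ≤ 1 := by
          rw [hlam, div_le_one hden]; linarith
        have hlamval : lam * (r₂ - r₁) = r₂ - b := by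
          rw [hlam]; field_simp
        have hcy : lam * r₁ + (1 - lam) * r₂ = b := by linear_combination - hlamval
        have hcx : lam * (1 - r₁) + (1 - lam) * (1 - r₂) = a := by
          linear_combination hlamval - hab
        have hzcomb : z = lam • q + (1 - lam) • p := by
          rw [hqeq', hpeq, hzdef, ← hcy, ← hcx]
          module
        have hcvx : u (lam • q + (1 - lam) • p) ≤ lam * u q + (1 - lam) * u p :=
          hu.2 hqB hpB hlam0 (by linarith) (by ring)
        rw [← hzcomb] at hcvx
        have h1 : lam * u q ≤ lam * ((1 - r₁) * w x + r₁ * w y) :=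
          mul_le_mul_of_nonneg_left hqu' hlam0
        have h2 : (1 - lam) * u p ≤ (1 - lam) * ((1 - r₂) * w x + r₂ * w y) :=
          mul_le_mul_of_nonneg_left hpu (by linarith)
        have h3 : lam * ((1 - r₁) * w x + r₁ * w y) + (1 - lam) * ((1 - r₂) * w x + r₂ * w y)
            = (lam * (1 - r₁) + (1 - lam) * (1 - r₂)) * w x
              + (lam * r₁ + (1 - lam) * r₂) * w y := by ring
        rw [hcy, hcx] at h3
        linarith
    exact max_le huzmax hvfin
  · rw [hwO z hzB' hzB]
    exact hvfin

end Glue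

/-- Hartman-type gluing lemma: if `F` is d.c. on an increasing sequence
of relatively open convex subsets exhausting `C`, with suitably separated consecutive
sets and bounded-or-Lipschitz control functions, then `F` is d.c. on `C`. -/
theorem dc_of_exhaustion {X Y : Type*}
    [NormedAddCommGroup X] [NormedSpace ℝ X]
    [NormedAddCommGroup Y] [NormedSpace ℝ Y]
    (C : Set X) (hCne : C.Nonempty) (hCconv : Convex ℝ C)
    (F : X → Y) (D : ℕ → Set X)
    (hDne : ∀ n, (D n).Nonempty) (hDconv : ∀ n, Convex ℝ (D n))
    (hDsub : ∀ n, D n ⊆ C)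
    (hDmono : ∀ n, D n ⊆ D (n + 1))
    (hDunion : (⋃ n, D n) = C)
    (hdist : ∀ n, ∃ ε > (0:ℝ), ∀ a ∈ D n, ∀ b ∈ C \ D (n + 1), ε ≤ ‖a - b‖)
    (hDrelopen : ∀ n, ∃ U : Set X, IsOpen U ∧ D n = U ∩ C)
    (hFdc : ∀ n, ContinuousOn F (D n) ∧ ∃ γ : X → ℝ, IsControlOn (D n) F γ ∧
      ((∃ M : ℝ, ∀ x ∈ D n, |γ x| ≤ M) ∨ (∃ L : NNReal, LipschitzOnWith L γ (D n)))) :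
    IsDCOn C F := by
  classical
  choose U hUopen hDeqU using hDrelopen
  choose ε hεpos hsep using hdist
  have hCiff : ∀ x : X, x ∈ C ↔ ∃ n, x ∈ D n := by
    intro x; rw [← hDunion]; exact mem_iUnion
  have Dmono : ∀ {m n : ℕ}, m ≤ n → D m ⊆ D n := by
    intro m n h
    induction n, h using Nat.le_induction with
    | base => exact subset_rfl
    | succ n hn ih => exact ih.trans (hDmono n)
  -- normalized control data
  have pack : ∀ n, ∃ (γc βc : X → ℝ) (Pv Qv Rv : ℝ),
      ContinuousOn γc (D n) ∧
      (∀ φ : Y →L[ℝ] ℝ, ‖φ‖ ≤ 1 → ConvexOn ℝ (D n) fun x => φ (F x) + γc x) ∧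
      ConvexOn ℝ univ βc ∧ Continuous βc ∧ (∀ x, 0 ≤ βc x) ∧
      (∀ x ∈ D n, 0 ≤ γc x ∧ βc x ≤ γc x ∧ γc x - βc x ≤ Rv ∧ γc x ≤ Pv + Qv * ‖x‖) ∧
      0 ≤ Pv ∧ 0 ≤ Qv ∧ 0 ≤ Rv := by
    intro n
    obtain ⟨hFcontn, γ, ⟨hγcont, hγctrl⟩, hcase⟩ := hFdc n
    rcases hcase with ⟨Mb, hMb⟩ | ⟨L, hLip⟩
    · -- bounded control function
      have hM0 : Mb ≤ max Mb 0 := le_max_left _ _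
      have hM0' : (0:ℝ) ≤ max Mb 0 := le_max_right _ _
      refine ⟨fun x => γ x + max Mb 0, fun _ => 0, 2 * max Mb 0, 0, 2 * max Mb 0,
        hγcont.add continuousOn_const, ?_, convexOn_const 0 convex_univ, continuous_const,
        fun x => le_refl 0, ?_, by linarith, le_refl 0, by linarith⟩
      · intro φ hφ
        refine ⟨hDconv n, ?_⟩
        intro x hx y hy a b ha hb hab
        have h2 := (hγctrl φ hφ).2 hx hy ha hb hab
        simp only [smul_eq_mul] at h2 ⊢
        have h3 : a * max Mb 0 + b * max Mb 0 = max Mb 0 := by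
          rw [← add_mul, hab, one_mul]
        nlinarith [h2]
      · intro x hx
        have h1 := abs_le.mp (hMb x hx)
        refine ⟨?_, ?_, ?_, ?_⟩
        · show (0:ℝ) ≤ γ x + max Mb 0
          linarith [h1.1]
        · show (0:ℝ) ≤ γ x + max Mb 0
          linarith [h1.1]
        · show γ x + max Mb 0 - 0 ≤ 2 * max Mb 0
          linarith [h1.2]
        · show γ x + max Mb 0 ≤ 2 * max Mb 0 + 0 * ‖x‖
          have h4 : (0:ℝ) * ‖x‖ = 0 := by ring
          linarith [h1.2]
    · -- Lipschitz control function
      have hγconvD : ConvexOn ℝ (D n) γ := by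
        have h0 := hγctrl 0 (by simp)
        have he : (fun x => (0 : Y →L[ℝ] ℝ) (F x) + γ x) = γ := by
          funext x; simp
        rwa [he] at h0
      have hL0 : (0:ℝ) ≤ (L:ℝ) := L.coe_nonneg
      have hlip : ∀ y ∈ D n, ∀ y' ∈ D n, γ y ≤ γ y' + (L:ℝ) * ‖y - y'‖ := by
        intro y hy y' hy'
        have hd := hLip.dist_le_mul y hy y' hy'
        rw [Real.dist_eq, dist_eq_norm] at hd
        have := abs_le.mp hd
        linarith [this.1]
      have hggeq : ∀ x ∈ D n, infConv (D n) γ (L:ℝ) x = γ x :=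
        fun x hx => infConv_eq_self (hDne n) hL0 hlip hx
      have hggcont := infConv_continuous (hDne n) hL0 hlip
      have hggconv := infConv_convexOn (hDne n) (hDconv n) hL0 hγconvD hlip
      obtain ⟨ℓ, hℓ⟩ := exists_subgradient_zero _ hggconv hggcont
      set gg := infConv (D n) γ (L:ℝ) with hgg
      have hβnn : ∀ x, (0:ℝ) ≤ gg x - gg 0 - ℓ x := by
        intro x; have := hℓ x; linarith
      have hβconv : ConvexOn ℝ univ (fun x => gg x - gg 0 - ℓ x) := by
        refine ⟨convex_univ, ?_⟩
        intro x _ y _ a b ha hb hab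
        have h1 := hggconv.2 (mem_univ x) (mem_univ y) ha hb hab
        have h2 : ℓ (a • x + b • y) = a * ℓ x + b * ℓ y := by
          rw [map_add, map_smul, map_smul]; simp [smul_eq_mul]
        simp only [smul_eq_mul] at h1 ⊢
        have h3 : a * gg 0 + b * gg 0 = gg 0 := by rw [← add_mul, hab, one_mul]
        rw [h2]
        linarith
      have hβcont : Continuous (fun x => gg x - gg 0 - ℓ x) :=
        (hggcont.sub continuous_const).sub ℓ.continuous
      refine ⟨fun x => gg x - gg 0 - ℓ x, fun x => gg x - gg 0 - ℓ x, 0, (L:ℝ) + ‖ℓ‖, 0,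
        hβcont.continuousOn, ?_, hβconv, hβcont, hβnn, ?_,
        le_refl 0, add_nonneg hL0 (norm_nonneg _), le_refl 0⟩
      · intro φ hφ
        refine ⟨hDconv n, ?_⟩
        intro x hx y hy a b ha hb hab
        have hz : a • x + b • y ∈ D n := hDconv n hx hy ha hb hab
        have h1 := (hγctrl φ hφ).2 hx hy ha hb hab
        have h2 : ℓ (a • x + b • y) = a * ℓ x + b * ℓ y := by
          rw [map_add, map_smul, map_smul]; simp [smul_eq_mul]
        have ex := hggeq x hx
        have ey := hggeq y hy
        have ez := hggeq _ hz
        simp only [smul_eq_mul] at h1 ⊢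
        rw [h2, ex, ey, ez]
        have h3 : a * gg 0 + b * gg 0 = gg 0 := by rw [← add_mul, hab, one_mul]
        nlinarith [h1]
      · intro x hx
        refine ⟨hβnn x, le_refl _, ?_, ?_⟩
        · show gg x - gg 0 - ℓ x - (gg x - gg 0 - ℓ x) ≤ 0
          ring_nf
          simp
        · show gg x - gg 0 - ℓ x ≤ 0 + ((L:ℝ) + ‖ℓ‖) * ‖x‖
          have h1 : gg x ≤ gg 0 + (L:ℝ) * ‖x - 0‖ := infConv_lip (hDne n) hL0 hlip x 0
          rw [sub_zero] at h1
          have h2 : ‖ℓ x‖ ≤ ‖ℓ‖ * ‖x‖ := ℓ.le_opNorm x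
          rw [Real.norm_eq_abs] at h2
          have h3 : -ℓ x ≤ |ℓ x| := neg_le_abs _
          have h4 : ((L:ℝ) + ‖ℓ‖) * ‖x‖ = (L:ℝ) * ‖x‖ + ‖ℓ‖ * ‖x‖ := by ring
          linarith
  choose γ' β Pc Qc Rc hγcont hγctrl hβconv hβcont hβnn hbounds hPnn hQnn hRnn using pack
  -- the distance functions
  have hddlip : ∀ k, ∀ y ∈ D k, ∀ y' ∈ D k,
      (fun _ : X => (0:ℝ)) y ≤ (fun _ : X => (0:ℝ)) y' + 1 * ‖y - y'‖ := by
    intro k y _ y' _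
    simp only [one_mul]
    positivity
  obtain ⟨dd, hdddef⟩ : ∃ dd : ℕ → X → ℝ, dd = fun k => infConv (D k) (fun _ => 0) 1 :=
    ⟨_, rfl⟩
  have dd0 : ∀ k, ∀ x ∈ D k, dd k x = 0 := by
    intro k x hx
    rw [hdddef]
    exact infConv_eq_self (hDne k) one_pos.le (hddlip k) hx
  have ddnn : ∀ k x, 0 ≤ dd k x := by
    intro k x
    rw [hdddef]
    exact le_infConv (hDne k) (fun y hy => by positivity)
  have ddconv : ∀ k, ConvexOn ℝ univ (dd k) := by
    intro k
    rw [hdddef]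
    exact infConv_convexOn (hDne k) (hDconv k) one_pos.le
      (convexOn_const 0 (hDconv k)) (hddlip k)
  have ddcont : ∀ k, Continuous (dd k) := by
    intro k
    rw [hdddef]
    exact infConv_continuous (hDne k) one_pos.le (hddlip k)
  have ddsep : ∀ k, ∀ x ∈ C, x ∉ D (k+1) → ε k ≤ dd k x := by
    intro k x hx hnx
    rw [hdddef]
    refine le_infConv (hDne k) (fun y hy => ?_)
    have h1 := hsep k y hy x ⟨hx, hnx⟩
    have h2 : ‖y - x‖ = ‖x - y‖ := norm_sub_rev _ _
    simp only [zero_add, one_mul]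
    linarith [h2 ▸ h1]
  -- the constants
  obtain ⟨Δ, hΔdef⟩ : ∃ Δ : ℕ → ℝ,
      Δ = fun s => if s ≤ 2 then -(Rc (s - 1)) else Pc s + Qc s * (s:ℝ) + 1 := ⟨_, rfl⟩
  obtain ⟨Mc, hMcdef⟩ : ∃ Mc : ℕ → ℝ, Mc = fun n => ∑ i ∈ Finset.range n, Δ (i+1) := ⟨_, rfl⟩
  obtain ⟨cc, hccdef⟩ : ∃ cc : ℕ → ℝ, cc = fun k => (Δ (k+3) + Rc (k+2)) / ε k := ⟨_, rfl⟩
  have hΔ1 : Δ 1 = -(Rc 0) := by rw [hΔdef]; norm_num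
  have hΔ2 : Δ 2 = -(Rc 1) := by rw [hΔdef]; norm_num
  have hΔ3 : ∀ k : ℕ, Δ (k+3) = Pc (k+3) + Qc (k+3) * ((k:ℝ)+3) + 1 := by
    intro k
    rw [hΔdef]
    simp only []
    rw [if_neg (by omega)]
    push_cast
    ring
  have hΔ3nn : ∀ k : ℕ, 0 ≤ Δ (k+3) := by
    intro k
    rw [hΔ3 k]
    have h1 := hPnn (k+3)
    have h2 := hQnn (k+3)
    have h3 : (0:ℝ) ≤ (k:ℝ) + 3 := by positivity
    nlinarith
  have hMsucc : ∀ n, Mc (n+1) = Mc n + Δ (n+1) := by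
    intro n
    rw [hMcdef]
    exact Finset.sum_range_succ _ n
  have hccnn : ∀ k, 0 ≤ cc k := by
    intro k
    rw [hccdef]
    exact div_nonneg (by linarith [hΔ3nn k, hRnn (k+2)]) (le_of_lt (hεpos k))
  have hccε : ∀ k, cc k * ε k = Δ (k+3) + Rc (k+2) := by
    intro k
    rw [hccdef]
    have hne : ε k ≠ 0 := ne_of_gt (hεpos k)
    field_simp
  -- the branch functions
  obtain ⟨hh, hhdef⟩ : ∃ hh : ℕ → X → ℝ, hh = fun n x => γ' n x +
      (∑ k ∈ Finset.range n, β k x) + (∑ k ∈ Finset.range (n-2), cc k * dd k x) - Mc n :=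
    ⟨_, rfl⟩
  -- continuity of the branch functions
  have hhcont : ∀ n, ContinuousOn (hh n) (D n) := by
    intro n
    rw [hhdef]
    apply ContinuousOn.sub _ continuousOn_const
    apply ContinuousOn.add
    · apply ContinuousOn.add (hγcont n)
      exact (continuous_finset_sum _ (fun k _ => hβcont k)).continuousOn
    · refine Continuous.continuousOn ?_
      exact continuous_finset_sum _ (fun k _ => continuous_const.mul (ddcont k))
  -- control property of the branch functions
  have hhctrl : ∀ n (φ : Y →L[ℝ] ℝ), ‖φ‖ ≤ 1 →
      ConvexOn ℝ (D n) (fun x => φ (F x) + hh n x) := by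
    intro n φ hφ
    have hBsum : ConvexOn ℝ univ (fun x => ∑ k ∈ Finset.range n, β k x) :=
      convexOn_finsetSum convex_univ _ (fun k _ => hβconv k)
    have hTsum : ConvexOn ℝ univ (fun x => ∑ k ∈ Finset.range (n-2), cc k * dd k x) := by
      refine convexOn_finsetSum convex_univ _ (fun k _ => ?_)
      have := (ddconv k).smul (hccnn k)
      simpa [smul_eq_mul] using this
    refine ⟨hDconv n, ?_⟩
    intro x hx y hy a b ha hb hab
    have hz : a • x + b • y ∈ D n := hDconv n hx hy ha hb hab
    have h1 := (hγctrl n φ hφ).2 hx hy ha hb hab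
    have h2 := hBsum.2 (mem_univ x) (mem_univ y) ha hb hab
    have h3 := hTsum.2 (mem_univ x) (mem_univ y) ha hb hab
    have h4 : a * Mc n + b * Mc n = Mc n := by rw [← add_mul, hab, one_mul]
    simp only [smul_eq_mul] at h1 h2 h3 ⊢
    rw [hhdef]
    simp only []
    nlinarith [h1, h2, h3]
  -- difference formulas
  have hdiff3 : ∀ m (x : X), hh (m+3) x - hh (m+2) x =
      γ' (m+3) x - γ' (m+2) x + β (m+2) x + cc m * dd m x - Δ (m+3) := by
    intro m x
    have e1 : (m+3) - 2 = (m+1) := by omega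
    have e2 : (m+2) - 2 = m := by omega
    rw [hhdef]
    simp only [e1, e2]
    rw [Finset.sum_range_succ (fun k => β k x) (m+2),
      Finset.sum_range_succ (fun k => cc k * dd k x) m, hMsucc (m+2)]
    ring
  have hdiff1 : ∀ x : X, hh 1 x - hh 0 x = γ' 1 x - γ' 0 x + β 0 x - Δ 1 := by
    intro x
    have e1 : (1:ℕ) - 2 = 0 := by omega
    have e0 : (0:ℕ) - 2 = 0 := by omega
    rw [hhdef]
    simp only [e1, e0, Finset.range_zero, Finset.sum_empty, Finset.sum_range_one]
    rw [hMsucc 0, hMcdef]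
    simp only [Finset.range_zero, Finset.sum_empty]
    ring
  have hdiff2 : ∀ x : X, hh 2 x - hh 1 x = γ' 2 x - γ' 1 x + β 1 x - Δ 2 := by
    intro x
    have e1 : (2:ℕ) - 2 = 0 := by omega
    have e2 : (1:ℕ) - 2 = 0 := by omega
    rw [hhdef]
    simp only [e1, e2]
    rw [hMsucc 1, Finset.sum_range_succ (fun k => β k x) 1]
    ring
  -- collar inequalities
  have col01 : ∀ x ∈ D 0, hh 0 x ≤ hh 1 x := by
    intro x hx
    have h1 := hdiff1 x
    have h2 := (hbounds 0 x hx).2.2.1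
    have h3 := (hbounds 1 x (Dmono (by omega) hx)).1
    rw [hΔ1] at h1
    linarith
  have col12 : ∀ x ∈ D 1, hh 1 x ≤ hh 2 x := by
    intro x hx
    have h1 := hdiff2 x
    have h2 := (hbounds 1 x hx).2.2.1
    have h3 := (hbounds 2 x (Dmono (by omega) hx)).1
    rw [hΔ2] at h1
    linarith
  have col02 : ∀ x ∈ D 0, hh 0 x ≤ hh 2 x := by
    intro x hx
    have h1 := col01 x hx
    have h2 := hdiff2 x
    have h3 := (hbounds 1 x (Dmono (by omega) hx)).2.2.1
    have h4 := (hbounds 2 x (Dmono (by omega) hx)).1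
    rw [hΔ2] at h2
    linarith
  have col3 : ∀ m, ∀ x ∈ D (m+2), x ∉ D (m+1) → hh (m+2) x ≤ hh (m+3) x := by
    intro m x hx hnx
    have h1 := hdiff3 m x
    have h2 := (hbounds (m+2) x hx).2.2.1
    have h3 := (hbounds (m+3) x (Dmono (by omega) hx)).1
    have h4 : ε m ≤ dd m x := ddsep m x (hDsub _ hx) hnx
    have h5 : cc m * ε m ≤ cc m * dd m x := mul_le_mul_of_nonneg_left h4 (hccnn m)
    rw [hccε m] at h5
    linarith
  -- the glued sequence
  have hgle : ∀ n (x : X), hh n x ≤ glueSeq D hh n x := by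
    intro n x
    cases n with
    | zero => exact le_of_eq rfl
    | succ n =>
      rw [glueSeq_succ]
      split_ifs with h
      · exact le_max_right _ _
      · exact le_refl _
  have gq1 : ∀ x : X, glueSeq D hh 1 x = hh 1 x := by
    intro x
    rw [glueSeq_succ]
    split_ifs with h
    · rw [glueSeq_zero]
      exact max_eq_right (col01 x h)
    · rfl
  have gq2 : ∀ x : X, glueSeq D hh 2 x = hh 2 x := by
    intro x
    rw [glueSeq_succ]
    split_ifs with h
    · rw [gq1]
      exact max_eq_right (col12 x h)
    · rfl
  have colg : ∀ m, ∀ x ∈ D (m+2), x ∉ D (m+1) → glueSeq D hh (m+2) x ≤ hh (m+3) x := by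
    intro m x hx hnx
    have : glueSeq D hh (m+2) x = hh (m+2) x := by
      rw [glueSeq_succ, if_neg hnx]
    rw [this]
    exact col3 m x hx hnx
  have gq3 : ∀ m (x : X), x ∈ D (m+3) → x ∉ D (m+1) → glueSeq D hh (m+3) x = hh (m+3) x := by
    intro m x hx hnx
    rw [glueSeq_succ]
    split_ifs with h
    · exact max_eq_right (colg m x h hnx)
    · rfl
  -- convexity (control property) of the glued functions
  have gctrl : ∀ n (φ : Y →L[ℝ] ℝ), ‖φ‖ ≤ 1 →
      ConvexOn ℝ (D n) (fun x => φ (F x) + glueSeq D hh n x) := by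
    intro n
    induction n with
    | zero => intro φ hφ; exact hhctrl 0 φ hφ
    | succ n ih =>
      intro φ hφ
      have hu := ih φ hφ
      have hv := hhctrl (n+1) φ hφ
      have hwB : ∀ t ∈ D n, (fun x => φ (F x) + glueSeq D hh (n+1) x) t
          = max ((fun x => φ (F x) + glueSeq D hh n x) t)
                ((fun x => φ (F x) + hh (n+1) x) t) := by
        intro t ht
        simp only []
        rw [glueSeq_succ, if_pos ht]
        rcases le_total (glueSeq D hh n t) (hh (n+1) t) with h | h
        · rw [max_eq_right h, max_eq_right (by linarith)]
        · rw [max_eq_left h, max_eq_left (by linarith)]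
      have hwO : ∀ t ∈ D (n+1), t ∉ D n →
          (fun x => φ (F x) + glueSeq D hh (n+1) x) t
            = (fun x => φ (F x) + hh (n+1) x) t := by
        intro t ht hnt
        simp only []
        rw [glueSeq_succ, if_neg hnt]
      match n, hu, hwB, hwO with
      | 0, hu, hwB, hwO =>
        refine glueMax (A := (∅ : Set X)) (ε := 1) hCconv (hDsub 1) (hDmono 0) (hDconv 0)
          (hDconv 1) (hUopen 0) (hDeqU 0) one_pos (by simp) hu hv ?_ hwB hwO
        intro x hx _
        have h1 := col01 x hx
        have h2 : glueSeq D hh 0 x = hh 0 x := rfl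
        rw [h2]
        linarith
      | 1, hu, hwB, hwO =>
        refine glueMax (A := (∅ : Set X)) (ε := 1) hCconv (hDsub 2) (hDmono 1) (hDconv 1)
          (hDconv 2) (hUopen 1) (hDeqU 1) one_pos (by simp) hu hv ?_ hwB hwO
        intro x hx _
        have h1 := col12 x hx
        rw [gq1 x]
        linarith
      | (m+2), hu, hwB, hwO =>
        refine glueMax (A := D (m+1)) (ε := ε (m+1)) hCconv (hDsub (m+3)) (hDmono (m+2))
          (hDconv (m+2)) (hDconv (m+3)) (hUopen (m+2)) (hDeqU (m+2)) (hεpos (m+1))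
          (hsep (m+1)) hu hv ?_ hwB hwO
        intro x hx hnx
        have h1 := colg m x hx hnx
        linarith
  -- continuity of the glued functions
  have gcont : ∀ n, ContinuousOn (glueSeq D hh n) (D n) := by
    intro n
    induction n with
    | zero => exact hhcont 0
    | succ n ih =>
      match n, ih with
      | 0, _ => exact (hhcont 1).congr (fun x _ => gq1 x)
      | 1, _ => exact (hhcont 2).congr (fun x _ => gq2 x)
      | (m+2), ih =>
        intro x hx
        by_cases hx2 : x ∈ D (m+2)
        · have hxU : x ∈ U (m+2) := by
            rw [hDeqU (m+2)] at hx2; exact hx2.1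
          have hx2' : x ∈ D (m+2) := by rw [hDeqU (m+2)]; exact ⟨hxU, hDsub (m+3) hx⟩
          refine cwa_of_eqOn_open (G := fun y => max (glueSeq D hh (m+2) y) (hh (m+3) y))
            (S' := D (m+2)) (hUopen (m+2)) hxU hx hx2' ?_ ?_ ?_
          · intro y hy
            rw [hDeqU (m+2)]
            exact ⟨hy.2, hDsub (m+3) hy.1⟩
          · intro y hy
            have hyD : y ∈ D (m+2) := by
              rw [hDeqU (m+2)]
              exact ⟨hy.2, hDsub (m+3) hy.1⟩
            rw [glueSeq_succ, if_pos hyD]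
          · have hsup : ContinuousOn (fun y => glueSeq D hh (m+2) y ⊔ hh (m+3) y) (D (m+2)) :=
              ContinuousOn.sup ih ((hhcont (m+3)).mono (Dmono (by omega)))
            exact hsup
        · have hddx : ε (m+1) ≤ dd (m+1) x := ddsep (m+1) x (hDsub _ hx) hx2
          refine cwa_of_eqOn_open (O := dd (m+1) ⁻¹' (Set.Ioi (ε (m+1)/2)))
            (G := hh (m+3)) (S' := D (m+3))
            (IsOpen.preimage (ddcont (m+1)) isOpen_Ioi) ?_ hx hx ?_ ?_ (hhcont (m+3))
          · show dd (m+1) x ∈ Set.Ioi (ε (m+1)/2)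
            have := hεpos (m+1)
            simp only [Set.mem_Ioi]
            linarith
          · exact inter_subset_left
          · intro y hy
            have hy1 : y ∉ D (m+1) := by
              intro hmem
              have h1 := dd0 (m+1) y hmem
              have h2 : ε (m+1)/2 < dd (m+1) y := hy.2
              have h3 := hεpos (m+1)
              rw [h1] at h2
              linarith
            exact gq3 m y hy.1 hy1
  -- stabilization
  have hstab : ∀ (m k : ℕ) (x : X), x ∈ D m → m ≤ k → ‖x‖ ≤ (k:ℝ) + 3 →
      glueSeq D hh (k+3) x = glueSeq D hh (k+2) x := by
    intro m k x hx hmk hxk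
    have hxk' : x ∈ D k := Dmono hmk hx
    have hx2 : x ∈ D (k+2) := Dmono (by omega) hx
    have hx3 : x ∈ D (k+3) := Dmono (by omega) hx
    have h1 : hh (k+3) x ≤ hh (k+2) x := by
      have hd := hdiff3 k x
      have hb3 := (hbounds (k+3) x hx3).2.2.2
      have hb2 := (hbounds (k+2) x hx2).2.1
      have hdd := dd0 k x hxk'
      have hQ : Qc (k+3) * ‖x‖ ≤ Qc (k+3) * ((k:ℝ)+3) :=
        mul_le_mul_of_nonneg_left hxk (hQnn (k+3))
      rw [hΔ3 k, hdd] at hd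
      have hcc0 : cc k * (0:ℝ) = 0 := by ring
      rw [hcc0] at hd
      push_cast at hd hb3 hQ ⊢
      linarith
    rw [glueSeq_succ, if_pos hx2]
    exact max_eq_left (h1.trans (hgle (k+2) x))
  have hstab' : ∀ (x : X) (hex : ∃ n, x ∈ D n) (n : ℕ),
      max (Nat.find hex) ⌈‖x‖⌉₊ + 2 ≤ n →
      glueSeq D hh n x = glueSeq D hh (max (Nat.find hex) ⌈‖x‖⌉₊ + 2) x := by
    intro x hex n hn
    induction n with
    | zero => exact absurd hn (by omega)
    | succ n ih =>
      rcases Nat.lt_or_ge n (max (Nat.find hex) ⌈‖x‖⌉₊ + 2) with hlt | hge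
      · have : max (Nat.find hex) ⌈‖x‖⌉₊ + 2 = n+1 := by omega
        rw [this]
      · obtain ⟨k, rfl⟩ : ∃ k, n = k + 2 := ⟨n - 2, by omega⟩
        have hm : Nat.find hex ≤ k := by
          have := le_max_left (Nat.find hex) ⌈‖x‖⌉₊; omega
        have hceil : ⌈‖x‖⌉₊ ≤ k := by
          have := le_max_right (Nat.find hex) ⌈‖x‖⌉₊; omega
        have hnorm : ‖x‖ ≤ (k:ℝ) + 3 := by
          have h1 : ‖x‖ ≤ (⌈‖x‖⌉₊ : ℝ) := Nat.le_ceil _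
          have h2 : ((⌈‖x‖⌉₊ : ℕ) : ℝ) ≤ (k:ℝ) := Nat.cast_le.mpr hceil
          linarith
        have hstep : glueSeq D hh (k+3) x = glueSeq D hh (k+2) x :=
          hstab (Nat.find hex) k x (Nat.find_spec hex) hm hnorm
        rw [show k + 2 + 1 = k + 3 from rfl, hstep]
        exact ih hge
  -- the final control function
  obtain ⟨f, hfdef⟩ : ∃ f : X → ℝ, f = fun x =>
      if hex : ∃ n, x ∈ D n then glueSeq D hh (max (Nat.find hex) ⌈‖x‖⌉₊ + 2) x else 0 :=
    ⟨_, rfl⟩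
  have floc : ∀ (x : X) (n : ℕ), x ∈ D n → ‖x‖ ≤ (n:ℝ) → f x = glueSeq D hh (n+2) x := by
    intro x n hxn hxnorm
    have hex : ∃ m, x ∈ D m := ⟨n, hxn⟩
    rw [hfdef]
    simp only []
    rw [dif_pos hex]
    have h1 : Nat.find hex ≤ n := Nat.find_min' hex hxn
    have h2 : ⌈‖x‖⌉₊ ≤ n := Nat.ceil_le.mpr hxnorm
    have h3 : max (Nat.find hex) ⌈‖x‖⌉₊ + 2 ≤ n + 2 := by
      have := max_le h1 h2; omega
    exact (hstab' x hex (n+2) h3).symm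
  -- continuity of F
  have Fcont : ContinuousOn F C := by
    intro x hx
    obtain ⟨m, hm⟩ := (hCiff x).1 hx
    have hxU : x ∈ U m := by rw [hDeqU m] at hm; exact hm.1
    refine cwa_of_eqOn_open (hUopen m) hxU hx hm ?_ (fun y _ => rfl) (hFdc m).1
    intro y hy
    rw [hDeqU m]; exact ⟨hy.2, hy.1⟩
  -- continuity of f
  have fcont : ContinuousOn f C := by
    intro x hx
    obtain ⟨m, hm⟩ := (hCiff x).1 hx
    have hxU : x ∈ U m := by rw [hDeqU m] at hm; exact hm.1
    have hOopen : IsOpen (U m ∩ {y : X | ‖y‖ < ‖x‖ + 1}) :=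
      (hUopen m).inter (isOpen_lt continuous_norm continuous_const)
    have hxO : x ∈ U m ∩ {y : X | ‖y‖ < ‖x‖ + 1} :=
      ⟨hxU, by simp only [Set.mem_setOf_eq]; linarith⟩
    have hxDn2 : x ∈ D (max m ⌈‖x‖ + 1⌉₊ + 2) := Dmono (by
      have := le_max_left m ⌈‖x‖ + 1⌉₊; omega) hm
    refine cwa_of_eqOn_open hOopen hxO hx hxDn2 ?_ ?_ (gcont (max m ⌈‖x‖ + 1⌉₊ + 2))
    · intro y hy
      have hyD : y ∈ D m := by rw [hDeqU m]; exact ⟨hy.2.1, hy.1⟩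
      refine Dmono (by have := le_max_left m ⌈‖x‖ + 1⌉₊; omega) hyD
    · intro y hy
      have hyD : y ∈ D m := by rw [hDeqU m]; exact ⟨hy.2.1, hy.1⟩
      have hyDn : y ∈ D (max m ⌈‖x‖ + 1⌉₊) := Dmono (le_max_left _ _) hyD
      have hynorm : ‖y‖ ≤ ((max m ⌈‖x‖ + 1⌉₊ : ℕ):ℝ) := by
        have h1 : ‖y‖ < ‖x‖ + 1 := hy.2.2
        have h2 : ‖x‖ + 1 ≤ (⌈‖x‖ + 1⌉₊ : ℝ) := Nat.le_ceil _
        have h3 : ((⌈‖x‖+1⌉₊ : ℕ):ℝ) ≤ ((max m ⌈‖x‖ + 1⌉₊ : ℕ):ℝ) :=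
          Nat.cast_le.mpr (le_max_right _ _)
        linarith
      exact floc y (max m ⌈‖x‖ + 1⌉₊) hyDn hynorm
  -- convexity of the control sums
  have fctrl : ∀ φ : Y →L[ℝ] ℝ, ‖φ‖ ≤ 1 → ConvexOn ℝ C (fun x => φ (F x) + f x) := by
    intro φ hφ
    refine ⟨hCconv, ?_⟩
    intro x hx y hy a b ha hb hab
    have hz : a • x + b • y ∈ C := hCconv hx hy ha hb hab
    obtain ⟨nx, hnx⟩ := (hCiff x).1 hx
    obtain ⟨ny, hny⟩ := (hCiff y).1 hy
    obtain ⟨nz, hnz⟩ := (hCiff _).1 hz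
    set R : ℝ := max (max ‖x‖ ‖y‖) ‖a • x + b • y‖ with hRdef
    set N : ℕ := max (max nx ny) nz with hNdef
    set n : ℕ := max N ⌈R⌉₊ with hndef
    have hxn : x ∈ D n :=
      Dmono (((le_max_left nx ny).trans (le_max_left _ nz)).trans (le_max_left N _)) hnx
    have hyn : y ∈ D n :=
      Dmono (((le_max_right nx ny).trans (le_max_left _ nz)).trans (le_max_left N _)) hny
    have hzn : a • x + b • y ∈ D n :=
      Dmono ((le_max_right (max nx ny) nz).trans (le_max_left N _)) hnz
    have hRn : ((⌈R⌉₊ : ℕ):ℝ) ≤ (n:ℝ) := Nat.cast_le.mpr (le_max_right N _)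
    have hRR : R ≤ ((⌈R⌉₊ : ℕ):ℝ) := Nat.le_ceil _
    have hxnorm : ‖x‖ ≤ (n:ℝ) := by
      have : ‖x‖ ≤ R := (le_max_left ‖x‖ ‖y‖).trans (le_max_left _ _)
      linarith
    have hynorm : ‖y‖ ≤ (n:ℝ) := by
      have : ‖y‖ ≤ R := (le_max_right ‖x‖ ‖y‖).trans (le_max_left _ _)
      linarith
    have hznorm : ‖a • x + b • y‖ ≤ (n:ℝ) := by
      have : ‖a • x + b • y‖ ≤ R := le_max_right _ _
      linarith
    have ex := floc x n hxn hxnorm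
    have ey := floc y n hyn hynorm
    have ez := floc (a • x + b • y) n hzn hznorm
    have hconv := (gctrl (n+2) φ hφ).2 (Dmono (by omega) hxn) (Dmono (by omega) hyn) ha hb hab
    simp only [smul_eq_mul] at hconv ⊢
    rw [ex, ey, ez]
    exact hconv
  exact ⟨Fcont, f, fcont, fctrl⟩
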